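/- The symmetric matrix N = [[-8,2,2,2],[2,-8,2,2],[2,2,-8,2],[2,2,2,-8]] has determinant 2000 = 2⁴·5³, and the integral quadratic form it defines represents no vector of norm −2: for every a ∈ ℤ⁴, aᵀNa ≠ −2. -/
import Mathlib


open Matrix

/-- The intersection matrix `(⟨F_i − G_i, F_j − G_j⟩)` of the classes `F_i − G_i`. -/
def N : Matrix (Fin 4) (Fin 4) ℤ :=
  !![-8, 2, 2, 2;
     2, -8, 2, 2;
     2, 2, -8, 2;
     2, 2, 2, -8]

theorem stmt16 :
    N.det = 2000 ∧
    (2000 : ℤ) = 2 ^ 4 * 5 ^ 3 ∧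
    ∀ a : Fin 4 → ℤ, a ⬝ᵥ N.mulVec a ≠ -2 := by
  refine ⟨by decide, by norm_num, ?_⟩
  intro a h
  have h' : -8*(a 0)^2 - 8*(a 1)^2 - 8*(a 2)^2 - 8*(a 3)^2
      + 4*(a 0*a 1 + a 0*a 2 + a 0*a 3 + a 1*a 2 + a 1*a 3 + a 2*a 3) = -2 := by
    rw [← h]; simp [N, mulVec, dotProduct, Fin.sum_univ_four, Matrix.vecHead, Matrix.vecTail]; ring
  set x := a 0 with hxdef
  set y := a 1 with hydef
  set z := a 2 with hzdef
  set w := a 3 with hwdef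
  have hq : x^2 + y^2 + z^2 + w^2 ≤ 1 := by
    nlinarith [sq_nonneg (x-y), sq_nonneg (x-z), sq_nonneg (x-w),
      sq_nonneg (y-z), sq_nonneg (y-w), sq_nonneg (z-w)]
  have hx1 : -1 ≤ x := by nlinarith [sq_nonneg (x+1), sq_nonneg y, sq_nonneg z, sq_nonneg w]
  have hx2 : x ≤ 1 := by nlinarith [sq_nonneg (x-1), sq_nonneg y, sq_nonneg z, sq_nonneg w]
  have hy1 : -1 ≤ y := by nlinarith [sq_nonneg (y+1), sq_nonneg x, sq_nonneg z, sq_nonneg w]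
  have hy2 : y ≤ 1 := by nlinarith [sq_nonneg (y-1), sq_nonneg x, sq_nonneg z, sq_nonneg w]
  have hz1 : -1 ≤ z := by nlinarith [sq_nonneg (z+1), sq_nonneg x, sq_nonneg y, sq_nonneg w]
  have hz2 : z ≤ 1 := by nlinarith [sq_nonneg (z-1), sq_nonneg x, sq_nonneg y, sq_nonneg w]
  have hw1 : -1 ≤ w := by nlinarith [sq_nonneg (w+1), sq_nonneg x, sq_nonneg y, sq_nonneg z]
  have hw2 : w ≤ 1 := by nlinarith [sq_nonneg (w-1), sq_nonneg x, sq_nonneg y, sq_nonneg z]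
  interval_cases x <;> interval_cases y <;> interval_cases z <;> interval_cases w <;>
    norm_num at h'
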